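/- Let v, w : Fin n → ℝ and p ∈ [1, ∞). Then ‖sort(v) − sort(w)‖_p ≤ ‖v − w‖_p, where sort denotes the monotone non-increasing rearrangement. In other words, sorting both vectors minimizes the ℓ_p distance over all matchings: ‖sort(v) − sort(w)‖_p = min over permutations σ of ‖v − w∘σ‖_p. -/

import Mathlib

open Real Finset

/-- Projection of a point of `ℝ²` onto the direction `θ`. -/
noncomputable def proj (θ : ℝ) (p : ℝ × ℝ) : ℝ := p.1 * Real.cos θ + p.2 * Real.sin θ

/-- Monotone non-increasing rearrangement of a vector. -/
noncomputable def sortd {n : ℕ} (v : Fin n → ℝ) : Fin n → ℝ :=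
  fun i => v (Tuple.sort v (Fin.rev i))

/-- The `ℓ_p` norm of a vector, for `p ∈ [1,∞)`. -/
noncomputable def lpNorm {n : ℕ} (p : ℝ) (u : Fin n → ℝ) : ℝ :=
  (∑ i, |u i| ^ p) ^ (1 / p)

/-- The `ℓ_∞` norm of a vector. -/
noncomputable def linfNorm {n : ℕ} (u : Fin n → ℝ) : ℝ := ⨆ i, |u i|

/-- The 1-dimensional sorted `p`-Wasserstein distance. -/
noncomputable def Wp {n : ℕ} (p : ℝ) (v w : Fin n → ℝ) : ℝ :=
  lpNorm p (sortd v - sortd w)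

/-- The 1-dimensional sorted `∞`-Wasserstein distance. -/
noncomputable def Winf {n : ℕ} (v w : Fin n → ℝ) : ℝ :=
  linfNorm (sortd v - sortd w)

/-- Euclidean norm on `ℝ²`. -/
noncomputable def enorm2 (p : ℝ × ℝ) : ℝ := Real.sqrt (p.1 ^ 2 + p.2 ^ 2)

/- ## Auxiliary lemmas -/

lemma convexOn_abs_rpow' (p : ℝ) (hp : 1 ≤ p) :
    ConvexOn ℝ Set.univ (fun t : ℝ => |t| ^ p) := by
  have habs : ConvexOn ℝ Set.univ (fun t : ℝ => |t|) := by
    refine ⟨convex_univ, fun x _ y _ a b ha hb hab => ?_⟩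
    simp only [smul_eq_mul]
    calc |a * x + b * y| ≤ |a * x| + |b * y| := abs_add_le _ _
      _ = a * |x| + b * |y| := by
          rw [abs_mul, abs_mul, abs_of_nonneg ha, abs_of_nonneg hb]
  have himg : ((fun t : ℝ => |t|) '' Set.univ) = Set.Ici (0 : ℝ) := by
    ext x
    simp only [Set.image_univ, Set.mem_range, Set.mem_Ici]
    constructor
    · rintro ⟨y, rfl⟩; exact abs_nonneg y
    · intro hx; exact ⟨x, abs_of_nonneg hx⟩
  have hg : ConvexOn ℝ ((fun t : ℝ => |t|) '' Set.univ) (fun x : ℝ => x ^ p) := by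
    rw [himg]; exact convexOn_rpow hp
  have hg' : MonotoneOn (fun x : ℝ => x ^ p) ((fun t : ℝ => |t|) '' Set.univ) := by
    rw [himg]
    exact fun x hx y _ hxy => Real.rpow_le_rpow hx hxy (le_trans zero_le_one hp)
  exact hg.comp habs hg'

lemma spread_convex (f : ℝ → ℝ) (hf : ConvexOn ℝ Set.univ f) {s t d : ℝ} (hd : 0 ≤ d)
    (hts : t - d ≤ s) : f s + f t ≤ f (s + d) + f (t - d) := by
  have hL0 : 0 ≤ s - t + 2 * d := by linarith
  rcases eq_or_lt_of_le hL0 with hL | hL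
  · have hd0 : d = 0 := by linarith
    subst hd0
    simp only [add_zero, sub_zero]
    exact le_refl _
  · have hLne : s - t + 2 * d ≠ 0 := ne_of_gt hL
    have hA : 0 ≤ d / (s - t + 2 * d) := div_nonneg hd hL.le
    have hB : 0 ≤ (s - t + d) / (s - t + 2 * d) := div_nonneg (by linarith) hL.le
    have hAB : d / (s - t + 2 * d) + (s - t + d) / (s - t + 2 * d) = 1 := by
      rw [← add_div, div_eq_one_iff_eq hLne]
      ring
    have hAB2 : (s - t + d) / (s - t + 2 * d) + d / (s - t + 2 * d) = 1 := by linarith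
    have h1 := hf.2 (Set.mem_univ (t - d)) (Set.mem_univ (s + d)) hA hB hAB
    have h2 := hf.2 (Set.mem_univ (t - d)) (Set.mem_univ (s + d)) hB hA hAB2
    simp only [smul_eq_mul] at h1 h2
    have e1 : d / (s - t + 2 * d) * (t - d) + (s - t + d) / (s - t + 2 * d) * (s + d) = s := by
      rw [div_mul_eq_mul_div, div_mul_eq_mul_div, ← add_div, div_eq_iff hLne]; ring
    have e2 : (s - t + d) / (s - t + 2 * d) * (t - d) + d / (s - t + 2 * d) * (s + d) = t := by
      rw [div_mul_eq_mul_div, div_mul_eq_mul_div, ← add_div, div_eq_iff hLne]; ring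
    rw [e1] at h1
    rw [e2] at h2
    have key : d / (s - t + 2 * d) * f (t - d) + (s - t + d) / (s - t + 2 * d) * f (s + d) +
        ((s - t + d) / (s - t + 2 * d) * f (t - d) + d / (s - t + 2 * d) * f (s + d)) =
        f (t - d) + f (s + d) := by
      linear_combination (f (t - d) + f (s + d)) * hAB
    linarith

lemma exchange_rpow (p : ℝ) (hp : 1 ≤ p) {X x Y y : ℝ} (hx : x ≤ X) (hy : y ≤ Y) :
    |X - Y| ^ p + |x - y| ^ p ≤ |X - y| ^ p + |x - Y| ^ p := by
  have h := spread_convex _ (convexOn_abs_rpow' p hp) (s := X - Y) (t := x - y) (d := Y - y)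
    (by linarith) (by linarith)
  have e1 : X - Y + (Y - y) = X - y := by ring
  have e2 : x - y - (Y - y) = x - Y := by ring
  rw [e1, e2] at h
  exact h

lemma exists_descent {n : ℕ} (g : Equiv.Perm (Fin n)) (hg : g ≠ 1) :
    ∃ (k : ℕ) (hk : k + 1 < n), g ⟨k + 1, hk⟩ < g ⟨k, Nat.lt_of_succ_lt hk⟩ := by
  by_contra hcon
  push_neg at hcon
  apply hg
  have step : ∀ (i m : ℕ) (h : i + m < n), g ⟨i, by omega⟩ ≤ g ⟨i + m, h⟩ := by
    intro i m
    induction m with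
    | zero => intro h; exact le_of_eq rfl
    | succ m ihm =>
      intro h
      have h1 : i + m < n := by omega
      exact le_trans (ihm h1) (hcon (i + m) h)
  have hmono : Monotone g := by
    intro i j hij
    obtain ⟨i, hi⟩ := i; obtain ⟨j, hj⟩ := j
    have hij' : i ≤ j := hij
    have h2 := step i (j - i) (by omega)
    have e : (⟨i + (j - i), by omega⟩ : Fin n) = ⟨j, hj⟩ := Fin.ext (by simp; omega)
    rwa [e] at h2
  have hsm : StrictMono g := hmono.strictMono_of_injective g.injective
  let e : Fin n ≃o Fin n := { toEquiv := g, map_rel_iff' := hsm.le_iff_le }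
  have he : e = OrderIso.refl (Fin n) := Subsingleton.elim _ _
  apply Equiv.ext
  intro i
  have hi2 : e i = i := by rw [he]; rfl
  exact hi2

lemma split_sum {M : Type*} [AddCommMonoid M] {n : ℕ} (kk kk1 : Fin n) (hne : kk ≠ kk1)
    (c : Fin n → M) :
    ∑ i, c i = (∑ i ∈ univ \ {kk, kk1}, c i) + (c kk + c kk1) := by
  rw [← Finset.sum_sdiff (Finset.subset_univ {kk, kk1}), Finset.sum_pair hne]

lemma sorted_sum_le {n : ℕ} (p : ℝ) (hp : 1 ≤ p) (a b : Fin n → ℝ)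
    (ha : Antitone a) (hb : Antitone b) (g : Equiv.Perm (Fin n)) :
    ∑ i, |a i - b i| ^ p ≤ ∑ i, |a i - b (g i)| ^ p := by
  suffices H : ∀ N : ℕ, ∀ g : Equiv.Perm (Fin n),
      (∑ i : Fin n, 2 ^ (i : ℕ) * (n - (g i : ℕ))) < N →
      ∑ i, |a i - b i| ^ p ≤ ∑ i, |a i - b (g i)| ^ p from
    H _ g (Nat.lt_succ_self _)
  intro N
  induction N with
  | zero => intro g h; exact absurd h (Nat.not_lt_zero _)
  | succ N ih =>
    intro g hgN
    by_cases hid : g = 1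
    · subst hid; simp
    · obtain ⟨k, hk, hdes⟩ := exists_descent g hid
      set kk : Fin n := ⟨k, Nat.lt_of_succ_lt hk⟩ with hkk
      set kk1 : Fin n := ⟨k + 1, hk⟩ with hkk1
      have hne : kk ≠ kk1 := by simp [hkk, hkk1, Fin.ext_iff]
      set g' : Equiv.Perm (Fin n) := g * Equiv.swap kk kk1 with hg'
      have hg'k : g' kk = g kk1 := by
        simp [hg', Equiv.Perm.mul_apply, Equiv.swap_apply_left]
      have hg'k1 : g' kk1 = g kk := by
        simp [hg', Equiv.Perm.mul_apply, Equiv.swap_apply_right]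
      have hg'other : ∀ i, i ≠ kk → i ≠ kk1 → g' i = g i := fun i h1 h2 => by
        simp [hg', Equiv.Perm.mul_apply, Equiv.swap_apply_of_ne_of_ne h1 h2]
      have huv : (g kk1 : ℕ) < (g kk : ℕ) := hdes
      have hvn : (g kk : ℕ) < n := (g kk).is_lt
      -- measure strictly decreases
      have hmlt : (∑ i : Fin n, 2 ^ (i : ℕ) * (n - (g' i : ℕ))) <
          ∑ i : Fin n, 2 ^ (i : ℕ) * (n - (g i : ℕ)) := by
        rw [split_sum kk kk1 hne (fun i => 2 ^ (i : ℕ) * (n - (g' i : ℕ))),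
          split_sum kk kk1 hne (fun i => 2 ^ (i : ℕ) * (n - (g i : ℕ)))]
        have hrest : ∑ i ∈ univ \ {kk, kk1}, 2 ^ (i : ℕ) * (n - (g' i : ℕ)) =
            ∑ i ∈ univ \ {kk, kk1}, 2 ^ (i : ℕ) * (n - (g i : ℕ)) := by
          refine Finset.sum_congr rfl fun i hi => ?_
          simp only [Finset.mem_sdiff, Finset.mem_univ, Finset.mem_insert,
            Finset.mem_singleton, true_and] at hi
          push_neg at hi
          rw [hg'other i hi.1 hi.2]
        rw [hrest]
        apply (add_lt_add_iff_left _).mpr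
        rw [hg'k, hg'k1]
        show 2 ^ k * (n - (g kk1 : ℕ)) + 2 ^ (k + 1) * (n - (g kk : ℕ)) <
          2 ^ k * (n - (g kk : ℕ)) + 2 ^ (k + 1) * (n - (g kk1 : ℕ))
        have hc : 0 < 2 ^ k := pow_pos (by norm_num) k
        have h2 : (2 : ℕ) ^ (k + 1) = 2 ^ k * 2 := by ring
        rw [h2]
        have keylt : (n - (g kk1 : ℕ)) + 2 * (n - (g kk : ℕ)) <
            (n - (g kk : ℕ)) + 2 * (n - (g kk1 : ℕ)) := by omega
        calc 2 ^ k * (n - (g kk1 : ℕ)) + 2 ^ k * 2 * (n - (g kk : ℕ))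
            = 2 ^ k * ((n - (g kk1 : ℕ)) + 2 * (n - (g kk : ℕ))) := by ring
          _ < 2 ^ k * ((n - (g kk : ℕ)) + 2 * (n - (g kk1 : ℕ))) :=
              mul_lt_mul_of_pos_left keylt hc
          _ = 2 ^ k * (n - (g kk : ℕ)) + 2 ^ k * 2 * (n - (g kk1 : ℕ)) := by ring
      -- cost does not increase
      have hcost : ∑ i, |a i - b (g' i)| ^ p ≤ ∑ i, |a i - b (g i)| ^ p := by
        rw [split_sum kk kk1 hne (fun i => |a i - b (g' i)| ^ p),
          split_sum kk kk1 hne (fun i => |a i - b (g i)| ^ p)]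
        refine add_le_add (le_of_eq (Finset.sum_congr rfl fun i hi => ?_)) ?_
        · simp only [Finset.mem_sdiff, Finset.mem_univ, Finset.mem_insert,
            Finset.mem_singleton, true_and] at hi
          push_neg at hi
          rw [hg'other i hi.1 hi.2]
        · rw [hg'k, hg'k1]
          have hX : a kk1 ≤ a kk := ha (le_of_lt (by simp [hkk, hkk1, Fin.lt_def]))
          have hY : b (g kk) ≤ b (g kk1) := hb (le_of_lt hdes)
          exact exchange_rpow p hp hX hY
      exact le_trans (ih g' (by omega)) hcost

lemma core_sum {n : ℕ} (p : ℝ) (hp : 1 ≤ p) (v w : Fin n → ℝ) (σ : Equiv.Perm (Fin n)) :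
    ∑ i, |sortd v i - sortd w i| ^ p ≤ ∑ i, |v i - w (σ i)| ^ p := by
  set τv : Equiv.Perm (Fin n) := Fin.revPerm.trans (Tuple.sort v) with hτv
  set τw : Equiv.Perm (Fin n) := Fin.revPerm.trans (Tuple.sort w) with hτw
  have hv : ∀ i, sortd v i = v (τv i) := fun i => rfl
  have hw : ∀ i, sortd w i = w (τw i) := fun i => rfl
  have hav : Antitone (sortd v) := fun i j hij =>
    Tuple.monotone_sort v (Fin.rev_le_rev.mpr hij)
  have haw : Antitone (sortd w) := fun i j hij =>
    Tuple.monotone_sort w (Fin.rev_le_rev.mpr hij)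
  set g : Equiv.Perm (Fin n) := τv.trans (σ.trans τw.symm) with hg
  have h2 : ∑ i, |v i - w (σ i)| ^ p = ∑ i, |sortd v i - sortd w (g i)| ^ p := by
    rw [← Equiv.sum_comp τv (fun i => |v i - w (σ i)| ^ p)]
    refine Finset.sum_congr rfl fun i _ => ?_
    rw [hv i, hw (g i)]
    simp [hg, Equiv.trans_apply]
  rw [h2]
  exact sorted_sum_le p hp _ _ hav haw g

lemma mem_sum_eq {n : ℕ} (p : ℝ) (v w : Fin n → ℝ) :
    ∃ σ : Equiv.Perm (Fin n),
      ∑ i, |sortd v i - sortd w i| ^ p = ∑ i, |v i - w (σ i)| ^ p := by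
  set τv : Equiv.Perm (Fin n) := Fin.revPerm.trans (Tuple.sort v) with hτv
  set τw : Equiv.Perm (Fin n) := Fin.revPerm.trans (Tuple.sort w) with hτw
  refine ⟨τv.symm.trans τw, ?_⟩
  rw [← Equiv.sum_comp τv (fun i => |v i - w ((τv.symm.trans τw) i)| ^ p)]
  refine Finset.sum_congr rfl fun i _ => ?_
  simp [Equiv.trans_apply, sortd, hτv, hτw]

theorem stmt_7 {n : ℕ} (p : ℝ) (hp : 1 ≤ p) (v w : Fin n → ℝ) :
    lpNorm p (sortd v - sortd w) ≤ lpNorm p (v - w) ∧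
    IsLeast {x : ℝ | ∃ σ : Equiv.Perm (Fin n), x = lpNorm p (v - w ∘ σ)}
      (lpNorm p (sortd v - sortd w)) := by
  have hp0 : (0 : ℝ) ≤ 1 / p := by positivity
  have hnonneg : (0 : ℝ) ≤ ∑ i, |(sortd v - sortd w) i| ^ p :=
    Finset.sum_nonneg fun i _ => Real.rpow_nonneg (abs_nonneg _) p
  have hle : ∀ σ : Equiv.Perm (Fin n),
      lpNorm p (sortd v - sortd w) ≤ lpNorm p (v - w ∘ σ) := by
    intro σ
    unfold lpNorm
    apply Real.rpow_le_rpow hnonneg _ hp0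
    simp only [Pi.sub_apply, Function.comp_apply]
    exact core_sum p hp v w σ
  constructor
  · have h := hle 1
    have he : (v - w ∘ (1 : Equiv.Perm (Fin n))) = v - w := by
      funext i; simp
    rwa [he] at h
  · constructor
    · obtain ⟨σ, hσ⟩ := mem_sum_eq p v w
      refine ⟨σ, ?_⟩
      unfold lpNorm
      have : ∑ i, |(sortd v - sortd w) i| ^ p = ∑ i, |(v - w ∘ σ) i| ^ p := by
        simpa only [Pi.sub_apply, Function.comp_apply] using hσ
      rw [this]
    · rintro x ⟨σ, rfl⟩
      exact hle σ
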